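/- For every 0/1 polytope P ⊆ ℝ^n of dimension d, every c ∈ ℝ^n, and every vertex x⁰ of P, there exists a finite sequence of vertices x⁰, x¹, …, x^k of P with k ≤ d such that for each i < k the vertices x^i and x^{i+1} are adjacent and ⟨c, x^i⟩ < ⟨c, x^{i+1}⟩, and x^k maximizes ⟨c,·⟩ over P. -/

import Mathlib

open Finset

attribute [local instance] Classical.propDecidable

noncomputable section

/-- Standard dot product on `Fin n → ℝ`. -/
def dotR {n : ℕ} (c x : Fin n → ℝ) : ℝ := ∑ i, c i * x i

/-- A polytope: the convex hull of a finite nonempty set of points. -/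
def IsPolytope {n : ℕ} (P : Set (Fin n → ℝ)) : Prop :=
  ∃ V : Finset (Fin n → ℝ), V.Nonempty ∧ P = convexHull ℝ (V : Set (Fin n → ℝ))

/-- A 0/1 polytope: the convex hull of a finite nonempty subset of `{0,1}^n`. -/
def IsPolytope01 {n : ℕ} (P : Set (Fin n → ℝ)) : Prop :=
  ∃ V : Finset (Fin n → ℝ), V.Nonempty ∧ (∀ w ∈ V, ∀ i, w i = 0 ∨ w i = 1) ∧
    P = convexHull ℝ (V : Set (Fin n → ℝ))

/-- A vertex of `P` is an extreme point of `P`. -/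
def IsVertex {n : ℕ} (P : Set (Fin n → ℝ)) (x : Fin n → ℝ) : Prop :=
  x ∈ P.extremePoints ℝ

/-- Two distinct vertices are adjacent when the segment between them is a face. -/
def Adjacent {n : ℕ} (P : Set (Fin n → ℝ)) (x y : Fin n → ℝ) : Prop :=
  IsVertex P x ∧ IsVertex P y ∧ x ≠ y ∧ IsExtreme ℝ P (segment ℝ x y)

/-- `u` is a `w`-improving neighbor of `x`. -/
def ImpNbr {n : ℕ} (P : Set (Fin n → ℝ)) (w x u : Fin n → ℝ) : Prop :=
  Adjacent P x u ∧ dotR w x < dotR w u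

/-- A Shadow-rule path on `P` with auxiliary vector `v` and objective `c`:
vertices `x 0, …, x k`, each step a `v`-improving neighbor maximizing the slope
`⟨c, u − xᵢ⟩ / ⟨v, u − xᵢ⟩` over all `v`-improving neighbors, and the last vertex
has no `v`-improving neighbor. -/
def ShadowPath {n : ℕ} (P : Set (Fin n → ℝ)) (c v : Fin n → ℝ) (k : ℕ)
    (x : ℕ → Fin n → ℝ) : Prop :=
  (∀ i ≤ k, IsVertex P (x i)) ∧
  (∀ i < k, ImpNbr P v (x i) (x (i + 1)) ∧
    ∀ u, ImpNbr P v (x i) u →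
      dotR c (u - x i) / dotR v (u - x i)
        ≤ dotR c (x (i + 1) - x i) / dotR v (x (i + 1) - x i)) ∧
  (∀ u, ¬ ImpNbr P v (x k) u)

/-- `f(u)` relative to `x0`: the largest index (in `1, …, n` labelling) where `u`
differs from `x0`, and `0` if there is none. -/
def lastIdx {n : ℕ} (x0 u : Fin n → ℝ) : ℕ :=
  (Finset.univ.filter fun j : Fin n => u j ≠ x0 j).sup fun j => (j : ℕ) + 1

/-- `f(w)` for a 0/1 vector: the largest index (in `1, …, n` labelling) with
`w j = 1`, and `0` for the zero vector. -/
def lastOne {n : ℕ} (w : Fin n → ℝ) : ℕ :=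
  (Finset.univ.filter fun j : Fin n => w j = 1).sup fun j => (j : ℕ) + 1

namespace MonoPathAux

variable {n : ℕ}

lemma dotR_isLinear (c : Fin n → ℝ) : IsLinearMap ℝ (dotR c) := by
  constructor
  · intro x y
    simp [dotR, Pi.add_apply, mul_add, Finset.sum_add_distrib]
  · intro a x
    simp only [dotR, Pi.smul_apply, smul_eq_mul, Finset.mul_sum]
    exact Finset.sum_congr rfl fun i _ => by ring

lemma mem_hull (V : Finset (Fin n → ℝ)) (p : Fin n → ℝ) :
    p ∈ convexHull ℝ (V : Set (Fin n → ℝ)) ↔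
      ∃ α : (Fin n → ℝ) → ℝ, (∀ w ∈ V, 0 ≤ α w) ∧ ∑ w ∈ V, α w = 1 ∧
        ∑ w ∈ V, α w • w = p := by
  rw [Finset.convexHull_eq]
  constructor
  · rintro ⟨α, h0, h1, h2⟩
    refine ⟨α, h0, h1, ?_⟩
    rw [Finset.centerMass_eq_of_sum_1 _ _ h1] at h2
    simpa using h2
  · rintro ⟨α, h0, h1, h2⟩
    refine ⟨α, h0, h1, ?_⟩
    rw [Finset.centerMass_eq_of_sum_1 _ _ h1]
    simpa using h2

lemma coord_combo (V : Finset (Fin n → ℝ)) (α : (Fin n → ℝ) → ℝ) (i : Fin n) :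
    (∑ w ∈ V, α w • w) i = ∑ w ∈ V, α w * w i := by
  simp [Finset.sum_apply]

lemma dotR_combo (V : Finset (Fin n → ℝ)) (α : (Fin n → ℝ) → ℝ) (c : Fin n → ℝ) :
    dotR c (∑ w ∈ V, α w • w) = ∑ w ∈ V, α w * dotR c w := by
  let L := (dotR_isLinear c).mk' (dotR c)
  have : dotR c = L := rfl
  rw [this, map_sum]
  exact Finset.sum_congr rfl fun w _ => by rw [map_smul]; simp [L]

lemma hull_le (V : Finset (Fin n → ℝ)) (c : Fin n → ℝ) (M : ℝ)
    (h : ∀ w ∈ V, dotR c w ≤ M) : ∀ p ∈ convexHull ℝ (V : Set (Fin n → ℝ)), dotR c p ≤ M := by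
  intro p hp
  exact convexHull_min (fun w hw => h w hw) (convex_halfSpace_le (dotR_isLinear c) M) hp

lemma zo_eq {a b : ℝ} (ha : a = 0 ∨ a = 1) (hb : b = 0 ∨ b = 1) (hne : b ≠ a) :
    b = 1 - a := by rcases ha with rfl | rfl <;> rcases hb with rfl | rfl <;> revert hne <;> norm_num

lemma zo_nonneg {a b : ℝ} (ha : a = 0 ∨ a = 1) (hb : b = 0 ∨ b = 1) :
    0 ≤ (b - a) * (1 - 2 * a) := by
  rcases ha with rfl | rfl <;> rcases hb with rfl | rfl <;> norm_num

lemma zo_eq_zero {a b : ℝ} (ha : a = 0 ∨ a = 1) (hb : b = 0 ∨ b = 1) :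
    (b - a) * (1 - 2 * a) = 0 ↔ b = a := by
  rcases ha with rfl | rfl <;> rcases hb with rfl | rfl <;> norm_num

/-- points of the hull of the filtered set have `i`-th coordinate `a`. -/
lemma hull_filter_coord (V : Finset (Fin n → ℝ)) (i : Fin n) (a : ℝ) :
    ∀ p ∈ convexHull ℝ ((V.filter fun w => w i = a : Finset (Fin n → ℝ)) : Set (Fin n → ℝ)),
      p i = a := by
  intro p hp
  have hlin : IsLinearMap ℝ (fun x : Fin n → ℝ => x i) := ⟨fun x y => rfl, fun c x => rfl⟩
  exact convexHull_min (fun w hw => (Finset.mem_filter.1 (Finset.mem_coe.1 hw)).2)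
    (convex_hyperplane hlin a) hp

/-- a point of the hull whose `i`-th coordinate is `a` lies in the hull of the filtered set. -/
lemma face_mem (V : Finset (Fin n → ℝ)) (hV01 : ∀ w ∈ V, ∀ i, w i = 0 ∨ w i = 1)
    (i : Fin n) (a : ℝ) (ha : a = 0 ∨ a = 1) :
    ∀ p ∈ convexHull ℝ (V : Set (Fin n → ℝ)), p i = a →
      p ∈ convexHull ℝ ((V.filter fun w => w i = a : Finset (Fin n → ℝ)) : Set (Fin n → ℝ)) := by
  intro p hp hpi
  obtain ⟨α, h0, h1, h2⟩ := (mem_hull V p).1 hp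
  have h1a : ∑ w ∈ V, α w * a = a := by rw [← Finset.sum_mul, h1, one_mul]
  have hsum0 : ∑ w ∈ V, α w * ((w i - a) * (1 - 2 * a)) = 0 := by
    have heq : ∑ w ∈ V, α w * ((w i - a) * (1 - 2 * a))
        = ((∑ w ∈ V, α w * w i) - (∑ w ∈ V, α w * a)) * (1 - 2 * a) := by
      rw [← Finset.sum_sub_distrib, Finset.sum_mul]
      exact Finset.sum_congr rfl fun w _ => by ring
    rw [heq, h1a, ← coord_combo, h2, hpi]
    ring
  have hterm : ∀ w ∈ V, α w * ((w i - a) * (1 - 2 * a)) = 0 :=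
    (Finset.sum_eq_zero_iff_of_nonneg (fun w hw =>
      mul_nonneg (h0 w hw) (zo_nonneg ha (hV01 w hw i)))).1 hsum0
  have hkey : ∀ w ∈ V, α w ≠ 0 → w i = a := by
    intro w hw hα
    have := hterm w hw
    rcases mul_eq_zero.1 this with h | h
    · exact absurd h hα
    · exact (zo_eq_zero ha (hV01 w hw i)).1 h
  rw [mem_hull]
  refine ⟨α, fun w hw => h0 w (Finset.mem_filter.1 hw).1, ?_, ?_⟩
  · rw [Finset.sum_filter]
    rw [← h1]
    refine Finset.sum_congr rfl fun w hw => ?_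
    by_cases h : w i = a
    · simp [h]
    · simp [h, by_contra fun hα => h (hkey w hw hα)]
  · rw [Finset.sum_filter, ← h2]
    refine Finset.sum_congr rfl fun w hw => ?_
    by_cases h : w i = a
    · simp [h]
    · have : α w = 0 := by_contra fun hα => h (hkey w hw hα)
      simp [h, this]


lemma hull_psi_nonneg (V : Finset (Fin n → ℝ)) (hV01 : ∀ w ∈ V, ∀ i, w i = 0 ∨ w i = 1)
    (i : Fin n) (a : ℝ) (ha : a = 0 ∨ a = 1) :
    ∀ p ∈ convexHull ℝ (V : Set (Fin n → ℝ)), 0 ≤ (p i - a) * (1 - 2 * a) := by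
  intro p hp
  have hlin : IsLinearMap ℝ (fun x : Fin n → ℝ => x i * (1 - 2 * a)) :=
    ⟨fun x y => by simp [add_mul], fun c x => by simp; ring⟩
  have hmem : p ∈ {x : Fin n → ℝ | a * (1 - 2 * a) ≤ x i * (1 - 2 * a)} := by
    refine convexHull_min (fun w hw => ?_) (convex_halfSpace_ge hlin (a * (1 - 2 * a))) hp
    have := zo_nonneg ha (hV01 w hw i)
    simp only [Set.mem_setOf_eq]
    nlinarith
  simp only [Set.mem_setOf_eq] at hmem
  nlinarith

lemma face_isExtreme (V : Finset (Fin n → ℝ)) (hV01 : ∀ w ∈ V, ∀ i, w i = 0 ∨ w i = 1)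
    (i : Fin n) (a : ℝ) (ha : a = 0 ∨ a = 1) :
    IsExtreme ℝ (convexHull ℝ (V : Set (Fin n → ℝ)))
      (convexHull ℝ ((V.filter fun w => w i = a : Finset (Fin n → ℝ)) : Set (Fin n → ℝ))) := by
  have h2a : (1 - 2 * a) ≠ 0 := by rcases ha with rfl | rfl <;> norm_num
  constructor
  · exact convexHull_mono (by exact_mod_cast Finset.filter_subset _ _)
  · intro p hp q hq z hz hzseg
    obtain ⟨u, v, hu, hv, huv, hzc⟩ := hzseg
    have hza : z i = a := hull_filter_coord V i a z hz
    have hpa : 0 ≤ (p i - a) * (1 - 2 * a) := hull_psi_nonneg V hV01 i a ha p hp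
    have hqa : 0 ≤ (q i - a) * (1 - 2 * a) := hull_psi_nonneg V hV01 i a ha q hq
    have hzi : z i = u * p i + v * q i := by rw [← hzc]; simp
    have hv1 : v = 1 - u := by linarith
    have hsum : u * ((p i - a) * (1 - 2 * a)) + v * ((q i - a) * (1 - 2 * a)) = 0 := by
      have : u * ((p i - a) * (1 - 2 * a)) + v * ((q i - a) * (1 - 2 * a))
          = (z i - a) * (1 - 2 * a) := by rw [hzi, hv1]; ring
      rw [this, hza]; ring
    have hup : u * ((p i - a) * (1 - 2 * a)) = 0 := by
      nlinarith [mul_nonneg hu.le hpa, mul_nonneg hv.le hqa]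
    have hvq : v * ((q i - a) * (1 - 2 * a)) = 0 := by
      nlinarith [mul_nonneg hu.le hpa, mul_nonneg hv.le hqa]
    have hpia : p i = a := by
      have := (mul_eq_zero.1 hup).resolve_left (ne_of_gt hu)
      have := (mul_eq_zero.1 this).resolve_right h2a
      linarith
    have hqia : q i = a := by
      have := (mul_eq_zero.1 hvq).resolve_left (ne_of_gt hv)
      have := (mul_eq_zero.1 this).resolve_right h2a
      linarith
    exact face_mem V hV01 i a ha p hp hpia

lemma face_rank_lt (V : Finset (Fin n → ℝ)) (i : Fin n) (a : ℝ)
    (hVa : (V.filter fun w => w i = a).Nonempty) (hw' : ∃ w ∈ V, w i ≠ a) :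
    Module.finrank ℝ
        (vectorSpan ℝ (convexHull ℝ ((V.filter fun w => w i = a : Finset (Fin n → ℝ)) : Set (Fin n → ℝ))))
      < Module.finrank ℝ (vectorSpan ℝ (convexHull ℝ (V : Set (Fin n → ℝ)))) := by
  obtain ⟨w, hwV, hwa⟩ := hw'
  obtain ⟨w', hw'⟩ := hVa
  have hle : vectorSpan ℝ (convexHull ℝ ((V.filter fun w => w i = a : Finset (Fin n → ℝ)) : Set (Fin n → ℝ)))
      ≤ vectorSpan ℝ (convexHull ℝ (V : Set (Fin n → ℝ))) :=
    vectorSpan_mono ℝ (convexHull_mono (by exact_mod_cast Finset.filter_subset _ _))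
  have hker : ∀ g ∈ vectorSpan ℝ (convexHull ℝ ((V.filter fun w => w i = a : Finset (Fin n → ℝ)) : Set (Fin n → ℝ))),
      g i = 0 := by
    intro g hg
    have : vectorSpan ℝ (convexHull ℝ ((V.filter fun w => w i = a : Finset (Fin n → ℝ)) : Set (Fin n → ℝ)))
        ≤ LinearMap.ker (LinearMap.proj (R := ℝ) (φ := fun _ : Fin n => ℝ) i) := by
      rw [vectorSpan_def]
      rw [Submodule.span_le]
      rintro g' ⟨p, hp, q, hq, rfl⟩
      simp only [SetLike.mem_coe, LinearMap.mem_ker]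
      have hpa := hull_filter_coord V i a p hp
      have hqa := hull_filter_coord V i a q hq
      show (p -ᵥ q) i = 0
      simp [vsub_eq_sub, hpa, hqa]
    simpa using this hg
  have hg : (w - w') ∈ vectorSpan ℝ (convexHull ℝ (V : Set (Fin n → ℝ))) := by
    have hwm : w ∈ convexHull ℝ (V : Set (Fin n → ℝ)) := subset_convexHull ℝ _ (Finset.mem_coe.2 hwV)
    have hw'm : w' ∈ convexHull ℝ (V : Set (Fin n → ℝ)) :=
      subset_convexHull ℝ _ (Finset.mem_coe.2 (Finset.mem_filter.1 hw').1)
    simpa [vsub_eq_sub] using vsub_mem_vectorSpan ℝ hwm hw'm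
  have hgn : (w - w') ∉ vectorSpan ℝ (convexHull ℝ ((V.filter fun w => w i = a : Finset (Fin n → ℝ)) : Set (Fin n → ℝ))) := by
    intro hmem
    have := hker _ hmem
    have hwi' : w' i = a := (Finset.mem_filter.1 hw').2
    simp only [Pi.sub_apply] at this
    rw [hwi'] at this
    exact hwa (by linarith)
  exact Submodule.finrank_lt_finrank_of_lt (lt_of_le_of_ne hle (fun h => hgn (h ▸ hg)))

lemma vertex_mono {F P : Set (Fin n → ℝ)} (hFP : F ⊆ P) {x : Fin n → ℝ}
    (hx : x ∈ P.extremePoints ℝ) (hxF : x ∈ F) : x ∈ F.extremePoints ℝ :=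
  inter_extremePoints_subset_extremePoints_of_subset hFP ⟨hxF, hx⟩

lemma exists_improving_vertex (V : Finset (Fin n → ℝ)) (c x0 : Fin n → ℝ)
    (h : ∃ p ∈ convexHull ℝ (V : Set (Fin n → ℝ)), dotR c x0 < dotR c p) :
    ∃ w ∈ V, dotR c x0 < dotR c w := by
  by_contra hcon
  push_neg at hcon
  obtain ⟨p, hp, hlt⟩ := h
  exact absurd (hull_le V c (dotR c x0) hcon p hp) (not_le.2 hlt)


lemma dotR_add (c x y : Fin n → ℝ) : dotR c (x + y) = dotR c x + dotR c y :=
  (dotR_isLinear c).map_add x y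

lemma dotR_smul (c : Fin n → ℝ) (a : ℝ) (x : Fin n → ℝ) :
    dotR c (a • x) = a * dotR c x := by
  rw [(dotR_isLinear c).map_smul]
  rfl

lemma dotR_comb2 (c : Fin n → ℝ) (s t : ℝ) (x y : Fin n → ℝ) :
    dotR c (s • x + t • y) = s * dotR c x + t * dotR c y := by
  rw [dotR_add, dotR_smul, dotR_smul]

lemma unique_max_point (V : Finset (Fin n → ℝ)) (c z : Fin n → ℝ) (hzV : z ∈ V)
    (hmax : ∀ w ∈ V, w ≠ z → dotR c w < dotR c z) :
    ∀ p ∈ convexHull ℝ (V : Set (Fin n → ℝ)), dotR c p = dotR c z → p = z := by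
  intro p hp hpc
  obtain ⟨α, h0, h1, h2⟩ := (mem_hull V p).1 hp
  have h1a : ∑ w ∈ V, α w * dotR c z = dotR c z := by rw [← Finset.sum_mul, h1, one_mul]
  have hsum0 : ∑ w ∈ V, α w * (dotR c z - dotR c w) = 0 := by
    have heq : ∑ w ∈ V, α w * (dotR c z - dotR c w)
        = (∑ w ∈ V, α w * dotR c z) - ∑ w ∈ V, α w * dotR c w := by
      rw [← Finset.sum_sub_distrib]
      exact Finset.sum_congr rfl fun w _ => by ring
    rw [heq, h1a, ← dotR_combo V α c, h2, hpc]
    ring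
  have hterm := (Finset.sum_eq_zero_iff_of_nonneg (fun w hw => by
    have : dotR c w ≤ dotR c z := by
      by_cases h : w = z
      · rw [h]
      · exact (hmax w hw h).le
    exact mul_nonneg (h0 w hw) (by linarith))).1 hsum0
  have hsupp : ∀ w ∈ V, α w ≠ 0 → w = z := by
    intro w hw hα
    by_contra hne
    have := hterm w hw
    rcases mul_eq_zero.1 this with h | h
    · exact hα h
    · exact absurd (by linarith : dotR c w = dotR c z) (ne_of_lt (hmax w hw hne))
  have hpair : ∑ w ∈ V, α w • w = ∑ w ∈ ({z} : Finset (Fin n → ℝ)), α w • w := by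
    refine (Finset.sum_subset (by simpa using hzV) (fun w hwV hwn => ?_)).symm
    have : α w = 0 := by
      by_contra hα
      exact hwn (by simpa using hsupp w hwV hα)
    simp [this]
  have hw1 : α z = 1 := by
    have : ∑ w ∈ V, α w = ∑ w ∈ ({z} : Finset (Fin n → ℝ)), α w := by
      refine (Finset.sum_subset (by simpa using hzV) (fun w hwV hwn => ?_)).symm
      by_contra hα
      exact hwn (by simpa using hsupp w hwV hα)
    rw [h1] at this
    simpa using this.symm
  rw [← h2, hpair]
  simp [hw1]

lemma unique_max_isVertex (V : Finset (Fin n → ℝ)) (c z : Fin n → ℝ) (hzV : z ∈ V)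
    (hmax : ∀ w ∈ V, w ≠ z → dotR c w < dotR c z) :
    z ∈ (convexHull ℝ (V : Set (Fin n → ℝ))).extremePoints ℝ := by
  refine ⟨subset_convexHull ℝ _ (Finset.mem_coe.2 hzV), ?_⟩
  intro x1 hx1 x2 hx2 hseg
  obtain ⟨u, v, hu, hv, huv, hc⟩ := hseg
  have hb : ∀ w ∈ V, dotR c w ≤ dotR c z := by
    intro w hw
    by_cases h : w = z
    · rw [h]
    · exact (hmax w hw h).le
  have h1 : dotR c x1 ≤ dotR c z := hull_le V c (dotR c z) hb x1 hx1
  have h2 : dotR c x2 ≤ dotR c z := hull_le V c (dotR c z) hb x2 hx2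
  have hzc : dotR c z = u * dotR c x1 + v * dotR c x2 := by rw [← hc, dotR_comb2]
  have huvz : u * dotR c z + v * dotR c z = dotR c z := by rw [← add_mul, huv, one_mul]
  have he1 : dotR c x1 = dotR c z := by
    by_contra h
    have hlt : dotR c x1 < dotR c z := lt_of_le_of_ne h1 h
    have h' : u * dotR c x1 + v * dotR c x2 < u * dotR c z + v * dotR c z :=
      add_lt_add_of_lt_of_le (mul_lt_mul_of_pos_left hlt hu) (mul_le_mul_of_nonneg_left h2 hv.le)
    linarith
  have he2 : dotR c x2 = dotR c z := by
    by_contra h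
    have hlt : dotR c x2 < dotR c z := lt_of_le_of_ne h2 h
    have h' : u * dotR c x1 + v * dotR c x2 < u * dotR c z + v * dotR c z :=
      add_lt_add_of_le_of_lt (mul_le_mul_of_nonneg_left h1 hu.le) (mul_lt_mul_of_pos_left hlt hv)
    linarith
  exact unique_max_point V c z hzV hmax x1 hx1 he1

lemma segment_face (V : Finset (Fin n → ℝ)) (hV01 : ∀ w ∈ V, ∀ i, w i = 0 ∨ w i = 1)
    (c x0 z : Fin n → ℝ) (hx0V : x0 ∈ V) (hzV : z ∈ V)
    (hzc : dotR c x0 < dotR c z)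
    (hmax : ∀ w ∈ V, w ≠ z → dotR c w ≤ dotR c x0)
    (hkey : ∀ w ∈ V, (∀ i, z i ≠ x0 i → w i = x0 i) → w = x0) :
    IsExtreme ℝ (convexHull ℝ (V : Set (Fin n → ℝ))) (segment ℝ x0 z) := by
  have hxz : x0 ≠ z := fun h => absurd hzc (by rw [h]; exact lt_irrefl _)
  constructor
  · exact (convex_convexHull ℝ _).segment_subset
      (subset_convexHull ℝ _ (Finset.mem_coe.2 hx0V)) (subset_convexHull ℝ _ (Finset.mem_coe.2 hzV))
  · intro p hp q hq y hy hyseg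
    obtain ⟨t1, t2, ht1, ht2, ht12, hyc⟩ := hy
    obtain ⟨u, v, hu, hv, huv, hyc2⟩ := hyseg
    obtain ⟨α, hα0, hα1, hα2⟩ := (mem_hull V p).1 hp
    obtain ⟨β, hβ0, hβ1, hβ2⟩ := (mem_hull V q).1 hq
    set γ : (Fin n → ℝ) → ℝ := fun w => u * α w + v * β w with hγdef
    have hγ0 : ∀ w ∈ V, 0 ≤ γ w := fun w hw =>
      add_nonneg (mul_nonneg hu.le (hα0 w hw)) (mul_nonneg hv.le (hβ0 w hw))
    have hγ1 : ∑ w ∈ V, γ w = 1 := by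
      simp only [hγdef, Finset.sum_add_distrib, ← Finset.mul_sum, hα1, hβ1, mul_one]
      exact huv
    have hγ2 : ∑ w ∈ V, γ w • w = y := by
      have : ∑ w ∈ V, γ w • w = u • (∑ w ∈ V, α w • w) + v • (∑ w ∈ V, β w • w) := by
        rw [Finset.smul_sum, Finset.smul_sum, ← Finset.sum_add_distrib]
        refine Finset.sum_congr rfl fun w _ => ?_
        simp only [hγdef, add_smul, smul_smul]
      rw [this, hα2, hβ2, hyc2]
    -- claim A : t2 ≤ γ z
    have hyγ : dotR c y = ∑ w ∈ V, γ w * dotR c w := by rw [← hγ2, dotR_combo]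
    have hyc' : dotR c y = t1 * dotR c x0 + t2 * dotR c z := by rw [← hyc, dotR_comb2]
    have hsplitc : ∑ w ∈ V, γ w * dotR c w
        = γ z * dotR c z + ∑ w ∈ V.erase z, γ w * dotR c w :=
      (Finset.add_sum_erase V _ hzV).symm
    have hγerase : ∑ w ∈ V.erase z, γ w = 1 - γ z := by
      have := Finset.add_sum_erase V γ hzV
      rw [hγ1] at this
      linarith
    have herase_le : ∑ w ∈ V.erase z, γ w * dotR c w
        ≤ (1 - γ z) * dotR c x0 := by
      rw [← hγerase, Finset.sum_mul]
      refine Finset.sum_le_sum fun w hw => ?_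
      exact mul_le_mul_of_nonneg_left
        (hmax w (Finset.mem_of_mem_erase hw) (Finset.ne_of_mem_erase hw))
        (hγ0 w (Finset.mem_of_mem_erase hw))
    have hA : t2 ≤ γ z := by
      have h1' : t1 * dotR c x0 + t2 * dotR c z ≤ γ z * dotR c z + (1 - γ z) * dotR c x0 := by
        rw [← hyc', hyγ, hsplitc]
        linarith [herase_le]
      have ht1' : t1 = 1 - t2 := by linarith
      rw [ht1'] at h1'
      by_contra hgt
      push_neg at hgt
      nlinarith [mul_pos (sub_pos.2 hgt) (sub_pos.2 hzc), h1']
    -- claim B : support of γ is {x0, z}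
    have hB : ∀ w ∈ V, γ w ≠ 0 → w = x0 ∨ w = z := by
      intro w hwV hγw
      by_cases hwz : w = z
      · exact Or.inr hwz
      refine Or.inl (hkey w hwV fun i hzi => ?_)
      have hx0i := hV01 x0 hx0V i
      have hzi01 := hV01 z hzV i
      have hz1 : z i = 1 - x0 i := zo_eq hx0i hzi01 hzi
      set r := 1 - 2 * x0 i with hrdef
      have hψz : (z i - x0 i) * r = 1 := by
        rw [hz1, hrdef]
        rcases hx0i with h | h <;> rw [h] <;> ring
      -- value of psi on y two ways
      have hyi : y i = t1 * x0 i + t2 * z i := by rw [← hyc]; simp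
      have hψy : (y i - x0 i) * r = t2 := by
        have ht1' : t1 = 1 - t2 := by linarith
        rw [hyi, ht1', hz1, hrdef]
        rcases hx0i with h | h <;> rw [h] <;> ring
      have hyγi : y i = ∑ w ∈ V, γ w * w i := by rw [← hγ2, coord_combo]
      have h1a : ∑ w ∈ V, γ w * x0 i = x0 i := by rw [← Finset.sum_mul, hγ1, one_mul]
      have hψsum : ∑ w ∈ V, γ w * ((w i - x0 i) * r) = t2 := by
        have heq : ∑ w ∈ V, γ w * ((w i - x0 i) * r)
            = ((∑ w ∈ V, γ w * w i) - (∑ w ∈ V, γ w * x0 i)) * r := by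
          rw [← Finset.sum_sub_distrib, Finset.sum_mul]
          exact Finset.sum_congr rfl fun w _ => by ring
        rw [heq, h1a, ← hyγi, hψy]
      have hsplitψ : ∑ w ∈ V, γ w * ((w i - x0 i) * r)
          = γ z * ((z i - x0 i) * r) + ∑ w ∈ V.erase z, γ w * ((w i - x0 i) * r) :=
        (Finset.add_sum_erase V _ hzV).symm
      have hterm_nonneg : ∀ w' ∈ V.erase z, 0 ≤ γ w' * ((w' i - x0 i) * r) := fun w' hw' =>
        mul_nonneg (hγ0 w' (Finset.mem_of_mem_erase hw'))
          (zo_nonneg hx0i (hV01 w' (Finset.mem_of_mem_erase hw') i))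
      have herψ : ∑ w ∈ V.erase z, γ w * ((w i - x0 i) * r) = 0 := by
        have hge : 0 ≤ ∑ w ∈ V.erase z, γ w * ((w i - x0 i) * r) :=
          Finset.sum_nonneg hterm_nonneg
        have : γ z + ∑ w ∈ V.erase z, γ w * ((w i - x0 i) * r) = t2 := by
          rw [← hψsum, hsplitψ, hψz, mul_one]
        linarith [hA]
      have hterm0 := (Finset.sum_eq_zero_iff_of_nonneg hterm_nonneg).1 herψ
      have hwz' : w ∈ V.erase z := Finset.mem_erase.2 ⟨hwz, hwV⟩
      have := hterm0 w hwz'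
      rcases mul_eq_zero.1 this with h | h
      · exact absurd h hγw
      · exact (zo_eq_zero hx0i (hV01 w hwV i)).1 h
    -- conclude for p and q
    have hfinish : ∀ (δ : (Fin n → ℝ) → ℝ), (∀ w ∈ V, 0 ≤ δ w) → ∑ w ∈ V, δ w = 1 →
        (∀ w ∈ V, δ w ≠ 0 → w = x0 ∨ w = z) →
        ∑ w ∈ V, δ w • w ∈ segment ℝ x0 z := by
      intro δ hδ0 hδ1 hδsupp
      have hsub : ({x0, z} : Finset (Fin n → ℝ)) ⊆ V := by
        intro w hw
        rcases Finset.mem_insert.1 hw with rfl | hw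
        · exact hx0V
        · rw [Finset.mem_singleton.1 hw]; exact hzV
      have hvan : ∀ w ∈ V, w ∉ ({x0, z} : Finset (Fin n → ℝ)) → δ w • w = 0 := by
        intro w hwV hwn
        have : δ w = 0 := by
          by_contra hδw
          rcases hδsupp w hwV hδw with rfl | rfl
          · exact hwn (Finset.mem_insert_self _ _)
          · exact hwn (by simp)
        simp [this]
      have hvan' : ∀ w ∈ V, w ∉ ({x0, z} : Finset (Fin n → ℝ)) → δ w = 0 := by
        intro w hwV hwn
        by_contra hδw
        rcases hδsupp w hwV hδw with rfl | rfl
        · exact hwn (Finset.mem_insert_self _ _)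
        · exact hwn (by simp)
      have hps : ∑ w ∈ V, δ w • w = δ x0 • x0 + δ z • z := by
        rw [← Finset.sum_subset hsub hvan, Finset.sum_pair hxz]
      have hws : δ x0 + δ z = 1 := by
        rw [← Finset.sum_pair (f := δ) hxz, Finset.sum_subset hsub hvan', hδ1]
      exact ⟨δ x0, δ z, hδ0 x0 hx0V, hδ0 z hzV, hws, hps.symm⟩
    · rw [← hα2]
      refine hfinish α hα0 hα1 fun w hwV hαw => hB w hwV ?_
      have hαpos : 0 < α w := lt_of_le_of_ne (hα0 w hwV) (Ne.symm hαw)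
      exact ne_of_gt (add_pos_of_pos_of_nonneg (mul_pos hu hαpos)
        (mul_nonneg hv.le (hβ0 w hwV)))


lemma improving_neighbor :
    ∀ (m : ℕ) (V : Finset (Fin n → ℝ)),
      (∀ w ∈ V, ∀ i, w i = 0 ∨ w i = 1) →
      ∀ (c x0 : Fin n → ℝ),
        x0 ∈ (convexHull ℝ (V : Set (Fin n → ℝ))).extremePoints ℝ →
        (∃ w ∈ V, dotR c x0 < dotR c w) →
        Module.finrank ℝ (vectorSpan ℝ (convexHull ℝ (V : Set (Fin n → ℝ)))) ≤ m →
        ∃ u, u ∈ (convexHull ℝ (V : Set (Fin n → ℝ))).extremePoints ℝ ∧ x0 ≠ u ∧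
          IsExtreme ℝ (convexHull ℝ (V : Set (Fin n → ℝ))) (segment ℝ x0 u) ∧
          dotR c x0 < dotR c u := by
  intro m
  induction m using Nat.strong_induction_on with
  | _ m IH =>
  intro V hV01 c x0 hx0 himp hrank
  have hx0V : x0 ∈ V := Finset.mem_coe.1 (extremePoints_convexHull_subset hx0)
  by_cases hcase : ∃ w ∈ V, (dotR c x0 < dotR c w) ∧ ∃ i, w i = x0 i ∧ ∃ w' ∈ V, w' i ≠ x0 i
  · obtain ⟨w, hwV, hwc, i, hwi, w', hw'V, hw'i⟩ := hcase
    have ha : x0 i = 0 ∨ x0 i = 1 := hV01 x0 hx0V i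
    have hx0Va : x0 ∈ V.filter (fun w => w i = x0 i) := Finset.mem_filter.2 ⟨hx0V, rfl⟩
    have hwVa : w ∈ V.filter (fun w => w i = x0 i) := Finset.mem_filter.2 ⟨hwV, hwi⟩
    have hface := face_isExtreme V hV01 i (x0 i) ha
    have hlt := face_rank_lt V i (x0 i) ⟨x0, hx0Va⟩ ⟨w', hw'V, hw'i⟩
    have h01a : ∀ w ∈ V.filter (fun w => w i = x0 i), ∀ j, w j = 0 ∨ w j = 1 :=
      fun w hw => hV01 w (Finset.mem_filter.1 hw).1
    have hx0F : x0 ∈ (convexHull ℝ ((V.filter (fun w => w i = x0 i) : Finset (Fin n → ℝ)) :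
        Set (Fin n → ℝ))).extremePoints ℝ :=
      vertex_mono hface.1 hx0 (subset_convexHull ℝ _ (Finset.mem_coe.2 hx0Va))
    obtain ⟨u, hu1, hu2, hu3, hu4⟩ :=
      IH _ (lt_of_lt_of_le hlt hrank) _ h01a c x0 hx0F ⟨w, hwVa, hwc⟩ le_rfl
    exact ⟨u, hface.extremePoints_subset_extremePoints hu1, hu2, hface.trans hu3, hu4⟩
  · push_neg at hcase
    obtain ⟨z, hzV, hzc⟩ := himp
    have hkey : ∀ w ∈ V, (∀ i, z i ≠ x0 i → w i = x0 i) → w = x0 := by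
      intro w hwV hw
      funext i
      by_cases hzi : z i = x0 i
      · exact hcase z hzV hzc i hzi w hwV
      · exact hw i hzi
    have huniq : ∀ w ∈ V, dotR c x0 < dotR c w → w = z := by
      intro w hwV hwc
      funext i
      by_cases hzi : z i = x0 i
      · rw [hzi]
        exact hcase z hzV hzc i hzi w hwV
      · by_cases hwi : w i = x0 i
        · exact absurd (hcase w hwV hwc i hwi z hzV) hzi
        · have hw1 : w i = 1 - x0 i := zo_eq (hV01 x0 hx0V i) (hV01 w hwV i) hwi
          have hz1 : z i = 1 - x0 i := zo_eq (hV01 x0 hx0V i) (hV01 z hzV i) hzi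
          rw [hw1, hz1]
    have hmax : ∀ w ∈ V, w ≠ z → dotR c w ≤ dotR c x0 := fun w hw hne =>
      le_of_not_gt (fun h => hne (huniq w hw h))
    have hmaxs : ∀ w ∈ V, w ≠ z → dotR c w < dotR c z := fun w hw hne =>
      lt_of_le_of_lt (hmax w hw hne) hzc
    refine ⟨z, unique_max_isVertex V c z hzV hmaxs, ?_,
      segment_face V hV01 c x0 z hx0V hzV hzc hmax hkey, hzc⟩
    intro h
    rw [h] at hzc
    exact lt_irrefl _ hzc


lemma main_aux :
    ∀ (m : ℕ) (V : Finset (Fin n → ℝ)), V.Nonempty →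
      (∀ w ∈ V, ∀ i, w i = 0 ∨ w i = 1) →
      ∀ (c x0 : Fin n → ℝ),
        IsVertex (convexHull ℝ (V : Set (Fin n → ℝ))) x0 →
        Module.finrank ℝ (vectorSpan ℝ (convexHull ℝ (V : Set (Fin n → ℝ)))) ≤ m →
        ∃ (k : ℕ) (x : ℕ → Fin n → ℝ), k ≤ m ∧ x 0 = x0 ∧
          (∀ i ≤ k, IsVertex (convexHull ℝ (V : Set (Fin n → ℝ))) (x i)) ∧
          (∀ i < k, Adjacent (convexHull ℝ (V : Set (Fin n → ℝ))) (x i) (x (i + 1)) ∧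
            dotR c (x i) < dotR c (x (i + 1))) ∧
          ∀ y ∈ convexHull ℝ (V : Set (Fin n → ℝ)), dotR c y ≤ dotR c (x k) := by
  intro m
  induction m using Nat.strong_induction_on with
  | _ m IH =>
  intro V hVne hV01 c x0 hx0 hrank
  have hx0V : x0 ∈ V := Finset.mem_coe.1 (extremePoints_convexHull_subset hx0)
  obtain ⟨z, hzV, hzmax⟩ := V.exists_max_image (dotR c) hVne
  by_cases hopt : dotR c z ≤ dotR c x0
  · refine ⟨0, fun _ => x0, Nat.zero_le _, rfl, fun i hi => ?_, fun i hi => absurd hi (Nat.not_lt_zero i), ?_⟩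
    · exact hx0
    · intro y hy
      exact le_trans (hull_le V c (dotR c z) hzmax y hy) hopt
  · push_neg at hopt
    by_cases hcase : ∃ zz ∈ V, (∀ w ∈ V, dotR c w ≤ dotR c zz) ∧
        ∃ i, zz i = x0 i ∧ ∃ w' ∈ V, w' i ≠ x0 i
    · -- Case 1 : some maximizer agrees with x0 on a non-constant coordinate
      obtain ⟨zz, hzzV, hzzmax, i, hzzi, w', hw'V, hw'i⟩ := hcase
      have ha : x0 i = 0 ∨ x0 i = 1 := hV01 x0 hx0V i
      have hx0Va : x0 ∈ V.filter (fun w => w i = x0 i) := Finset.mem_filter.2 ⟨hx0V, rfl⟩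
      have hzzVa : zz ∈ V.filter (fun w => w i = x0 i) := Finset.mem_filter.2 ⟨hzzV, hzzi⟩
      have hface := face_isExtreme V hV01 i (x0 i) ha
      have hlt := face_rank_lt V i (x0 i) ⟨x0, hx0Va⟩ ⟨w', hw'V, hw'i⟩
      have h01a : ∀ w ∈ V.filter (fun w => w i = x0 i), ∀ j, w j = 0 ∨ w j = 1 :=
        fun w hw => hV01 w (Finset.mem_filter.1 hw).1
      have hx0F : IsVertex (convexHull ℝ ((V.filter (fun w => w i = x0 i) : Finset (Fin n → ℝ)) :
          Set (Fin n → ℝ))) x0 :=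
        vertex_mono hface.1 hx0 (subset_convexHull ℝ _ (Finset.mem_coe.2 hx0Va))
      obtain ⟨k, x, hk, hxx0, hvert, hstep, hmaxF⟩ :=
        IH _ (lt_of_lt_of_le hlt hrank) _ ⟨x0, hx0Va⟩ h01a c x0 hx0F le_rfl
      refine ⟨k, x, le_trans hk (le_of_lt (lt_of_lt_of_le hlt hrank)), hxx0, ?_, ?_, ?_⟩
      · exact fun j hj => hface.extremePoints_subset_extremePoints (hvert j hj)
      · intro j hj
        obtain ⟨⟨hv1, hv2, hne, hseg⟩, hmono⟩ := hstep j hj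
        exact ⟨⟨hface.extremePoints_subset_extremePoints hv1,
          hface.extremePoints_subset_extremePoints hv2, hne, hface.trans hseg⟩, hmono⟩
      · intro y hy
        refine le_trans (hull_le V c (dotR c zz) hzzmax y hy) ?_
        exact hmaxF zz (subset_convexHull ℝ _ (Finset.mem_coe.2 hzzVa))
    · -- Case 2 : every maximizer is antipodal to x0 on all non-constant coordinates
      push_neg at hcase
      obtain ⟨u, huvert, hneu, husegment, huimp⟩ :=
        improving_neighbor (Module.finrank ℝ (vectorSpan ℝ (convexHull ℝ (V : Set (Fin n → ℝ)))))
          V hV01 c x0 hx0 ⟨z, hzV, hopt⟩ le_rfl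
      have huV : u ∈ V := Finset.mem_coe.1 (extremePoints_convexHull_subset huvert)
      have hm1 : 1 ≤ Module.finrank ℝ (vectorSpan ℝ (convexHull ℝ (V : Set (Fin n → ℝ)))) := by
        rw [Submodule.one_le_finrank_iff]
        intro hbot
        have hg : (u -ᵥ x0) ∈ vectorSpan ℝ (convexHull ℝ (V : Set (Fin n → ℝ))) :=
          vsub_mem_vectorSpan ℝ (subset_convexHull ℝ _ (Finset.mem_coe.2 huV))
            (subset_convexHull ℝ _ (Finset.mem_coe.2 hx0V))
        rw [hbot, Submodule.mem_bot] at hg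
        exact (sub_ne_zero.2 (Ne.symm hneu)) hg
      by_cases huz : dotR c z ≤ dotR c u
      · -- one step to the unique optimum
        refine ⟨1, fun j => if j = 0 then x0 else u, le_trans hm1 hrank, by simp, ?_, ?_, ?_⟩
        · intro j hj
          by_cases h : j = 0
          · simpa [h] using hx0
          · simpa [h, IsVertex] using huvert
        · intro j hj
          have hj0 : j = 0 := Nat.lt_one_iff.1 hj
          subst hj0
          simpa using ⟨⟨hx0, huvert, hneu, husegment⟩, huimp⟩
        · intro y hy
          simpa using le_trans (hull_le V c (dotR c z) hzmax y hy) huz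
      · push_neg at huz
        have hune : u ≠ z := fun h => by rw [h] at huz; exact lt_irrefl _ huz
        have hexists : ∃ i, u i = z i ∧ z i ≠ x0 i := by
          by_contra hno
          push_neg at hno
          have hux0 : u = x0 := by
            funext i
            by_cases hzi : z i = x0 i
            · exact hcase z hzV hzmax i hzi u huV
            · by_cases hui : u i = z i
              · exact absurd (hno i hui) hzi
              · have hz1 : z i = 1 - x0 i := zo_eq (hV01 x0 hx0V i) (hV01 z hzV i) hzi
                by_cases hux : u i = x0 i
                · exact hux
                · have hu1 : u i = 1 - x0 i := zo_eq (hV01 x0 hx0V i) (hV01 u huV i) hux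
                  exact absurd (hu1.trans hz1.symm) hui
          exact hneu hux0.symm
        obtain ⟨i, hui, hzi⟩ := hexists
        have ha : u i = 0 ∨ u i = 1 := hV01 u huV i
        have huVa : u ∈ V.filter (fun w => w i = u i) := Finset.mem_filter.2 ⟨huV, rfl⟩
        have hzVa : z ∈ V.filter (fun w => w i = u i) := Finset.mem_filter.2 ⟨hzV, hui.symm⟩
        have hx0ne : x0 i ≠ u i := fun h => hzi (by rw [← hui, ← h])
        have hface := face_isExtreme V hV01 i (u i) ha
        have hlt := face_rank_lt V i (u i) ⟨u, huVa⟩ ⟨x0, hx0V, hx0ne⟩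
        have h01a : ∀ w ∈ V.filter (fun w => w i = u i), ∀ j, w j = 0 ∨ w j = 1 :=
          fun w hw => hV01 w (Finset.mem_filter.1 hw).1
        have huF : IsVertex (convexHull ℝ ((V.filter (fun w => w i = u i) : Finset (Fin n → ℝ)) :
            Set (Fin n → ℝ))) u :=
          vertex_mono hface.1 huvert (subset_convexHull ℝ _ (Finset.mem_coe.2 huVa))
        obtain ⟨k, xx, hk, hxx0, hvert, hstep, hmaxF⟩ :=
          IH _ (lt_of_lt_of_le hlt hrank) _ ⟨u, huVa⟩ h01a c u huF le_rfl
        refine ⟨k + 1, fun j => if j = 0 then x0 else xx (j - 1),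
          Nat.succ_le_of_lt (lt_of_le_of_lt hk (lt_of_lt_of_le hlt hrank)), by simp, ?_, ?_, ?_⟩
        · intro j hj
          by_cases h : j = 0
          · simpa [h] using hx0
          · simp only [if_neg h]
            exact hface.extremePoints_subset_extremePoints
              (hvert (j - 1) (Nat.sub_le_sub_right hj 1))
        · intro j hj
          by_cases h : j = 0
          · subst h
            simp only [if_pos rfl, if_neg (Nat.one_ne_zero : (1:ℕ) ≠ 0)]
            rw [hxx0]
            exact ⟨⟨hx0, huvert, hneu, husegment⟩, huimp⟩
          · obtain ⟨j', rfl⟩ : ∃ j', j = j' + 1 := ⟨j - 1, (Nat.succ_pred_eq_of_pos (Nat.pos_of_ne_zero h)).symm⟩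
            have hj' : j' < k := Nat.lt_of_succ_lt_succ hj
            obtain ⟨⟨hv1, hv2, hne, hseg⟩, hmono⟩ := hstep j' hj'
            have e1 : j' + 1 - 1 = j' := rfl
            have e2 : j' + 1 + 1 - 1 = j' + 1 := rfl
            simp only [if_neg (Nat.succ_ne_zero j'), if_neg (Nat.succ_ne_zero (j' + 1)), e1, e2]
            exact ⟨⟨hface.extremePoints_subset_extremePoints hv1,
              hface.extremePoints_subset_extremePoints hv2, hne, hface.trans hseg⟩, hmono⟩
        · intro y hy
          have h1 : dotR c y ≤ dotR c z := hull_le V c (dotR c z) hzmax y hy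
          have h2 : dotR c z ≤ dotR c (xx k) :=
            hmaxF z (subset_convexHull ℝ _ (Finset.mem_coe.2 hzVa))
          simp only [if_neg (Nat.succ_ne_zero k), Nat.add_sub_cancel]
          linarith

end MonoPathAux

/-- Monotone-path version of Theorem 1.3: from any vertex of a 0/1 polytope of
dimension `d` there is a strictly `c`-monotone path of length at most `d` on the
1-skeleton ending at a `c`-maximum. -/
theorem monotone_path_length_le_dim {n : ℕ} (P : Set (Fin n → ℝ))
    (hP : IsPolytope01 P)
    (d : ℕ) (hd : Module.finrank ℝ (affineSpan ℝ P).direction = d)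
    (c : Fin n → ℝ) (x0 : Fin n → ℝ) (hx0 : IsVertex P x0) :
    ∃ (k : ℕ) (x : ℕ → Fin n → ℝ), k ≤ d ∧ x 0 = x0 ∧
      (∀ i ≤ k, IsVertex P (x i)) ∧
      (∀ i < k, Adjacent P (x i) (x (i + 1)) ∧ dotR c (x i) < dotR c (x (i + 1))) ∧
      ∀ y ∈ P, dotR c y ≤ dotR c (x k) := by
  obtain ⟨V, hVne, hV01, rfl⟩ := hP
  have hrank : Module.finrank ℝ (vectorSpan ℝ (convexHull ℝ (V : Set (Fin n → ℝ)))) ≤ d := by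
    rw [← direction_affineSpan ℝ (convexHull ℝ (V : Set (Fin n → ℝ)))] at *
    exact le_of_eq hd
  exact MonoPathAux.main_aux d V hVne hV01 c x0 hx0 hrank
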